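/- Let i be an irrational real number with 0 < i < 1, let M = ([0, 5 + i/2] ∩ ℚ) ∪ (5 + i/2, ∞) regarded as an additive submonoid of the nonnegative reals, and let N = (ℤ × (M ∖ {0})) ∪ (ℕ₀ × {0}) regarded as an additive submonoid of ℤ × ℝ. Let F be a field, let R = F[X; N] be the monoid ring, let m be its maximal ideal of elements with zero constant term, and let D = R_m. Then the maximal ideal mR_m of D is principal, generated by the image of the monomial X^{(1,0)}; in particular D satisfies the MIP condition. -/

import Mathlib

open scoped Classical

/-- The "constant term" homomorphism of a monoid algebra `F[X; M]`, for a monoid `M` in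
which `a + b = 0` forces `a = b = 0`; it sends `a₁X^{α₁} + ⋯ + aₙX^{αₙ}` to its
coefficient at the identity `0` of `M` (see `constantTermHom_apply`). -/
noncomputable def constantTermHom (F M : Type*) [Field F] [AddCommMonoid M]
    (hM : ∀ a b : M, a + b = 0 → a = 0 ∧ b = 0) : AddMonoidAlgebra F M →ₐ[F] F :=
  AddMonoidAlgebra.lift F F M
    { toFun := fun a => if a.toAdd = 0 then 1 else 0
      map_one' := by simp
      map_mul' := fun a b => by
        rcases em (a.toAdd = 0) with ha | ha
        · rcases em (b.toAdd = 0) with hb | hb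
          · simp [ha, hb]
          · have h : a.toAdd + b.toAdd ≠ 0 := fun h => hb (hM _ _ h).2
            simp [ha, hb, toAdd_mul, h]
        · have h : a.toAdd + b.toAdd ≠ 0 := fun h => ha (hM _ _ h).1
          simp [ha, toAdd_mul, h] }

theorem constantTermHom_apply (F M : Type*) [Field F] [AddCommMonoid M]
    (hM : ∀ a b : M, a + b = 0 → a = 0 ∧ b = 0) (f : AddMonoidAlgebra F M) :
    constantTermHom F M hM f = f.coeff 0 := by
  classical
  rw [constantTermHom, AddMonoidAlgebra.lift_apply]
  simp only [MonoidHom.coe_mk, OneHom.coe_mk, toAdd_ofAdd, smul_eq_mul, mul_ite, mul_one,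
    mul_zero]
  rw [Finsupp.sum_ite_eq' f.coeff 0 (fun _ b => b)]
  split
  · rfl
  · next h => exact (Finsupp.notMem_support_iff.mp h).symm

/-- The augmentation ideal of the monoid algebra `F[X; M]`, consisting of all elements
with zero constant term (zero coefficient at the identity of `M`). -/
noncomputable def augIdeal (F M : Type*) [Field F] [AddCommMonoid M]
    (hM : ∀ a b : M, a + b = 0 → a = 0 ∧ b = 0) : Ideal (AddMonoidAlgebra F M) :=
  RingHom.ker (constantTermHom F M hM)

theorem mem_augIdeal_iff (F M : Type*) [Field F] [AddCommMonoid M]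
    (hM : ∀ a b : M, a + b = 0 → a = 0 ∧ b = 0) (f : AddMonoidAlgebra F M) :
    f ∈ augIdeal F M hM ↔ f.coeff 0 = 0 := by
  rw [augIdeal, RingHom.mem_ker, constantTermHom_apply]

/-- The augmentation ideal is a maximal ideal. -/
instance augIdeal_isMaximal (F M : Type*) [Field F] [AddCommMonoid M]
    {hM : ∀ a b : M, a + b = 0 → a = 0 ∧ b = 0} : (augIdeal F M hM).IsMaximal :=
  RingHom.ker_isMaximal_of_surjective _ (fun c =>
    ⟨AddMonoidAlgebra.single 0 c, by simp [constantTermHom]⟩)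

/-- The set `M = ([0, 5 + i/2] ∩ ℚ) ∪ (5 + i/2, ∞)` of nonnegative reals. -/
def Mcarrier (i : ℝ) : Set ℝ :=
  (Set.Icc (0 : ℝ) (5 + i / 2) ∩ Set.range ((↑) : ℚ → ℝ)) ∪ Set.Ioi (5 + i / 2)

theorem Mcarrier.nonneg {i : ℝ} (hi0 : 0 < i) {x : ℝ} (hx : x ∈ Mcarrier i) : 0 ≤ x := by
  rcases hx with ⟨⟨h1, _⟩, _⟩ | h
  · exact h1
  · have : (0 : ℝ) < 5 + i / 2 := by linarith
    exact le_of_lt (lt_trans this h)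

theorem Mcarrier.add_mem {i : ℝ} (hi0 : 0 < i) {a b : ℝ}
    (ha : a ∈ Mcarrier i) (hb : b ∈ Mcarrier i) : a + b ∈ Mcarrier i := by
  rcases ha with ⟨⟨ha1, ha2⟩, ⟨p, hp⟩⟩ | ha
  · rcases hb with ⟨⟨hb1, hb2⟩, ⟨s, hs⟩⟩ | hb
    · rcases lt_or_ge (5 + i / 2) (a + b) with h | h
      · exact Or.inr h
      · exact Or.inl ⟨⟨by linarith, h⟩, ⟨p + s, by push_cast [hp, hs]; ring⟩⟩
    · exact Or.inr (by simp only [Set.mem_Ioi] at hb ⊢; linarith)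
  · have hb0 : 0 ≤ b := Mcarrier.nonneg hi0 hb
    exact Or.inr (by simp only [Set.mem_Ioi] at ha ⊢; linarith)

/-- `M` as an additive submonoid of the reals. -/
def Msubmonoid (i : ℝ) (hi0 : 0 < i) : AddSubmonoid ℝ where
  carrier := Mcarrier i
  zero_mem' := Or.inl ⟨⟨le_refl 0, by linarith⟩, ⟨0, by norm_num⟩⟩
  add_mem' := fun ha hb => Mcarrier.add_mem hi0 ha hb

theorem Msubmonoid_pos_monoid (i : ℝ) (hi0 : 0 < i) :
    ∀ a b : Msubmonoid i hi0, a + b = 0 → a = 0 ∧ b = 0 := fun a b h => by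
  have hs : (a : ℝ) + (b : ℝ) = 0 := by
    have := congrArg Subtype.val h
    push_cast at this
    exact this
  have ha := Mcarrier.nonneg hi0 a.2
  have hb := Mcarrier.nonneg hi0 b.2
  refine ⟨Subtype.ext ?_, Subtype.ext ?_⟩ <;>
    simp only [ZeroMemClass.coe_zero] <;> linarith

/-- The set `N = (ℤ × (M \ {0})) ∪ (ℕ₀ × {0})` inside `ℤ × ℝ`. -/
def Ncarrier (i : ℝ) : Set (ℤ × ℝ) :=
  {p | (p.2 ∈ Mcarrier i ∧ p.2 ≠ 0) ∨ (0 ≤ p.1 ∧ p.2 = 0)}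

/-- `N` as an additive submonoid of `ℤ × ℝ`. -/
def Nsubmonoid (i : ℝ) (hi0 : 0 < i) : AddSubmonoid (ℤ × ℝ) where
  carrier := Ncarrier i
  zero_mem' := Or.inr ⟨le_refl 0, rfl⟩
  add_mem' := fun {a b} ha hb => by
    have hsnd : (a + b).2 = a.2 + b.2 := rfl
    have hfst : (a + b).1 = a.1 + b.1 := rfl
    rcases ha with ⟨ha1, ha2⟩ | ⟨ha1, ha2⟩
    · rcases hb with ⟨hb1, hb2⟩ | ⟨hb1, hb2⟩
      · have hpa : 0 < a.2 := lt_of_le_of_ne (Mcarrier.nonneg hi0 ha1) (Ne.symm ha2)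
        have hpb : 0 < b.2 := lt_of_le_of_ne (Mcarrier.nonneg hi0 hb1) (Ne.symm hb2)
        exact Or.inl ⟨hsnd ▸ Mcarrier.add_mem hi0 ha1 hb1,
          hsnd ▸ ne_of_gt (add_pos hpa hpb)⟩
      · exact Or.inl ⟨by rw [hsnd, hb2, add_zero]; exact ha1,
          by rw [hsnd, hb2, add_zero]; exact ha2⟩
    · rcases hb with ⟨hb1, hb2⟩ | ⟨hb1, hb2⟩
      · exact Or.inl ⟨by rw [hsnd, ha2, zero_add]; exact hb1,
          by rw [hsnd, ha2, zero_add]; exact hb2⟩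
      · exact Or.inr ⟨by rw [hfst]; omega, by rw [hsnd, ha2, hb2, add_zero]⟩

theorem Ncarrier.snd_nonneg {i : ℝ} (hi0 : 0 < i) {x : ℤ × ℝ} (hx : x ∈ Ncarrier i) :
    0 ≤ x.2 := by
  rcases hx with ⟨hx1, _⟩ | ⟨_, hx2⟩
  · exact Mcarrier.nonneg hi0 hx1
  · rw [hx2]

theorem Nsubmonoid_pos_monoid (i : ℝ) (hi0 : 0 < i) :
    ∀ a b : Nsubmonoid i hi0, a + b = 0 → a = 0 ∧ b = 0 := fun a b h => by
  have hval : (a : ℤ × ℝ) + (b : ℤ × ℝ) = 0 := by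
    have := congrArg Subtype.val h
    push_cast at this
    exact this
  have h1 : (a : ℤ × ℝ).1 + (b : ℤ × ℝ).1 = 0 := congrArg Prod.fst hval
  have h2 : (a : ℤ × ℝ).2 + (b : ℤ × ℝ).2 = 0 := congrArg Prod.snd hval
  have ka : 0 ≤ (a : ℤ × ℝ).2 := Ncarrier.snd_nonneg hi0 a.property
  have kb : 0 ≤ (b : ℤ × ℝ).2 := Ncarrier.snd_nonneg hi0 b.property
  have ha2 : (a : ℤ × ℝ).2 = 0 := by linarith
  have hb2 : (b : ℤ × ℝ).2 = 0 := by linarith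
  have ha1 : 0 ≤ (a : ℤ × ℝ).1 := by
    rcases a.property with ⟨_, h'⟩ | ⟨h', _⟩
    · exact absurd ha2 h'
    · exact h'
  have hb1 : 0 ≤ (b : ℤ × ℝ).1 := by
    rcases b.property with ⟨_, h'⟩ | ⟨h', _⟩
    · exact absurd hb2 h'
    · exact h'
  refine ⟨Subtype.ext ?_, Subtype.ext ?_⟩ <;> rw [ZeroMemClass.coe_zero] <;>
      refine Prod.ext_iff.mpr ⟨?_, ?_⟩ <;> simp only [Prod.fst_zero, Prod.snd_zero]
  · omega
  · exact ha2
  · omega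
  · exact hb2

theorem mem_N_one_zero (i : ℝ) (hi0 : 0 < i) : ((1 : ℤ), (0 : ℝ)) ∈ Nsubmonoid i hi0 :=
  Or.inr ⟨by norm_num, rfl⟩

theorem exists_sub_gen (i : ℝ) (hi0 : 0 < i) (n : Nsubmonoid i hi0) (hn : n ≠ 0) :
    ∃ m : Nsubmonoid i hi0,
      (⟨((1 : ℤ), (0 : ℝ)), mem_N_one_zero i hi0⟩ : Nsubmonoid i hi0) + m = n := by
  rcases n.property with ⟨h1, h2⟩ | ⟨h1, h2⟩
  · refine ⟨⟨((n : ℤ × ℝ).1 - 1, (n : ℤ × ℝ).2), Or.inl ⟨h1, h2⟩⟩, ?_⟩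
    apply Subtype.ext
    show ((1 : ℤ), (0 : ℝ)) + ((n : ℤ × ℝ).1 - 1, (n : ℤ × ℝ).2) = (n : ℤ × ℝ)
    rw [Prod.mk_add_mk, zero_add]
    exact Prod.ext (by ring) rfl
  · have hk : (n : ℤ × ℝ).1 ≠ 0 := by
      intro h0
      apply hn
      apply Subtype.ext
      show (n : ℤ × ℝ) = 0
      exact Prod.ext h0 h2
    refine ⟨⟨((n : ℤ × ℝ).1 - 1, (0 : ℝ)), Or.inr ⟨by omega, rfl⟩⟩, ?_⟩
    apply Subtype.ext
    show ((1 : ℤ), (0 : ℝ)) + ((n : ℤ × ℝ).1 - 1, (0 : ℝ)) = (n : ℤ × ℝ)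
    rw [Prod.mk_add_mk, zero_add]
    exact Prod.ext (by ring) h2.symm

theorem augIdeal_eq_span (i : ℝ) (hi0 : 0 < i) (F : Type*) [Field F] :
    augIdeal F (Nsubmonoid i hi0) (Nsubmonoid_pos_monoid i hi0) =
      Ideal.span {AddMonoidAlgebra.single
        (⟨((1 : ℤ), (0 : ℝ)), mem_N_one_zero i hi0⟩ : Nsubmonoid i hi0) (1 : F)} := by
  set g : Nsubmonoid i hi0 := ⟨((1 : ℤ), (0 : ℝ)), mem_N_one_zero i hi0⟩
  have hg : g ≠ 0 := by
    intro h
    have := congrArg (fun x : Nsubmonoid i hi0 => (x : ℤ × ℝ).1) h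
    simp [g] at this
  apply le_antisymm
  · intro f hf
    rw [mem_augIdeal_iff] at hf
    have hrep : (f.coeff.support.sum fun n => AddMonoidAlgebra.single n (f.coeff n)) = f :=
      AddMonoidAlgebra.sum_coeff_single f
    rw [← hrep]
    apply Ideal.sum_mem
    intro n hn
    have hn0 : n ≠ 0 := by
      rintro rfl
      exact (Finsupp.mem_support_iff.mp hn) hf
    obtain ⟨m, hm⟩ := exists_sub_gen i hi0 n hn0
    rw [Ideal.mem_span_singleton']
    refine ⟨AddMonoidAlgebra.single m (f.coeff n), ?_⟩
    rw [AddMonoidAlgebra.single_mul_single, mul_one, add_comm, hm]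
  · rw [Ideal.span_le, Set.singleton_subset_iff]
    rw [SetLike.mem_coe, mem_augIdeal_iff]
    exact Finsupp.single_eq_of_ne (by exact fun h => hg h.symm)

/-- Let `i` be an irrational real with `0 < i < 1`, let
`M = ([0, 5 + i/2] ∩ ℚ) ∪ (5 + i/2, ∞)` as a submonoid of the nonnegative reals, let
`N = (ℤ × (M \ {0})) ∪ (ℕ₀ × {0})` as a submonoid of `ℤ × ℝ`, let `F` be a field,
`R = F[X; N]` the monoid ring, `m` its maximal ideal of elements with zero constant
term, and `D = R_m`. Then the maximal ideal `mR_m` of `D` is principal, generated by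
the image of the monomial `X^{(1,0)}`; in particular `D` satisfies the MIP condition. -/
theorem localization_monoidAlgebra_N_mip (i : ℝ) (hi : Irrational i) (hi0 : 0 < i)
    (hi1 : i < 1) (F : Type*) [Field F] :
    (Ideal.map (algebraMap (AddMonoidAlgebra F (Nsubmonoid i hi0))
        (Localization.AtPrime (augIdeal F (Nsubmonoid i hi0) (Nsubmonoid_pos_monoid i hi0))))
        (augIdeal F (Nsubmonoid i hi0) (Nsubmonoid_pos_monoid i hi0)) =
      Ideal.span {algebraMap (AddMonoidAlgebra F (Nsubmonoid i hi0))
        (Localization.AtPrime (augIdeal F (Nsubmonoid i hi0) (Nsubmonoid_pos_monoid i hi0)))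
        (AddMonoidAlgebra.single (⟨((1 : ℤ), (0 : ℝ)), mem_N_one_zero i hi0⟩ :
          Nsubmonoid i hi0) (1 : F))}) ∧
    (∀ I : Ideal (Localization.AtPrime
        (augIdeal F (Nsubmonoid i hi0) (Nsubmonoid_pos_monoid i hi0))),
      I.IsMaximal → I.IsPrincipal) := by
  have hspan := augIdeal_eq_span i hi0 F
  have hmap : Ideal.map (algebraMap (AddMonoidAlgebra F (Nsubmonoid i hi0))
      (Localization.AtPrime (augIdeal F (Nsubmonoid i hi0) (Nsubmonoid_pos_monoid i hi0))))
      (augIdeal F (Nsubmonoid i hi0) (Nsubmonoid_pos_monoid i hi0)) =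
      Ideal.span {algebraMap (AddMonoidAlgebra F (Nsubmonoid i hi0))
        (Localization.AtPrime (augIdeal F (Nsubmonoid i hi0) (Nsubmonoid_pos_monoid i hi0)))
        (AddMonoidAlgebra.single (⟨((1 : ℤ), (0 : ℝ)), mem_N_one_zero i hi0⟩ :
          Nsubmonoid i hi0) (1 : F))} := by
    rw [congrArg (Ideal.map _) hspan, Ideal.map_span, Set.image_singleton]
  refine ⟨hmap, fun I hI => ?_⟩
  rw [IsLocalRing.eq_maximalIdeal hI, ← Localization.AtPrime.map_eq_maximalIdeal, hmap]
  exact ⟨⟨_, rfl⟩⟩
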